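/- For a self-similar hierarchical branching process with λ_j = γζ^{−j} and p_K = p(1−p)^{K−1}, the hydrodynamic average branch-count vector satisfies x(s) = π + Σ_{m=1}^∞ (s^m/m!) [∏_{i=1}^m t̂(ζ^{−i}(1−p))] Λ^m π, where π = Σ_K p_K e_K. -/

import Mathlib

set_option maxHeartbeats 1000000
set_option synthInstance.maxHeartbeats 400000


/-- **Series expansion of the hydrodynamic limit `x(s) = e^{GΛs} π`.**
In `ℓ¹(ℕ, ℝ)` (coordinate `n` ↔ order `K = n+1`), let `Gop` be the Toeplitz
operator with diagonal `-1`, superdiagonal `T_1 + 2` and entries `T_k`,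
`Lam = diag(γ ζ^{-j})`, and let `π` have coordinates `p_K = p(1-p)^{K-1}`.
Then for all `s`,
`e^{G Lam s} π = π + ∑_{m≥1} (s^m/m!) ⬝ [∏_{i=1}^m t̂(ζ^{-i}(1-p))] ⬝ Lam^m π`,
where `t̂(z) = -1 + 2z + ∑_{k≥1} T_k z^k`. -/
theorem stmt_12 (T : ℕ → ℝ) (hT : ∀ k, 0 ≤ T k)
    (p γ ζ : ℝ) (hp : 0 < p) (hp1 : p < 1) (hγ : 0 < γ) (hζ : 1 ≤ ζ)
    (hsum : Summable fun k : ℕ => T (k + 1) * ((1 - p) / ζ) ^ (k + 1))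
    (p0 : lp (fun _ : ℕ => ℝ) 1) (hp0 : ∀ n : ℕ, p0 n = p * (1 - p) ^ n)
    (Gop Lam : lp (fun _ : ℕ => ℝ) 1 →L[ℝ] lp (fun _ : ℕ => ℝ) 1)
    (hG : ∀ (x : lp (fun _ : ℕ => ℝ) 1) (n : ℕ),
      Gop x n = -(x n) + (T 1 + 2) * x (n + 1) +
        ∑' k : ℕ, T (k + 2) * x (n + k + 2))
    (hLam : ∀ (x : lp (fun _ : ℕ => ℝ) 1) (n : ℕ),
      Lam x n = γ / ζ ^ (n + 1) * x n) :
    ∀ s : ℝ, NormedSpace.exp (s • (Gop.comp Lam)) p0 =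
      p0 + ∑' m : ℕ,
        ((s ^ (m + 1) / (Nat.factorial (m + 1)) *
            ∏ i ∈ Finset.range (m + 1),
              (-1 + 2 * ((1 - p) / ζ ^ (i + 1)) +
                ∑' k : ℕ, T (k + 1) * ((1 - p) / ζ ^ (i + 1)) ^ (k + 1))) •
          ((Lam ^ (m + 1)) p0)) := by
  intro s
  have hζ0 : (0:ℝ) < ζ := lt_of_lt_of_le one_pos hζ
  have h1p : (0:ℝ) ≤ 1 - p := by linarith
  -- summability of the eigenvalue series at any `0 ≤ w ≤ (1-p)/ζ`
  have Ssum : ∀ w : ℝ, 0 ≤ w → w ≤ (1 - p) / ζ →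
      Summable fun k : ℕ => T (k + 1) * w ^ (k + 1) := by
    intro w hw hwle
    refine Summable.of_nonneg_of_le (fun k => mul_nonneg (hT _) (pow_nonneg hw _))
      (fun k => mul_le_mul_of_nonneg_left (pow_le_pow_left₀ hw hwle _) (hT _)) hsum
  have hwnn : ∀ m : ℕ, (0:ℝ) ≤ (1 - p) / ζ ^ (m + 1) :=
    fun m => div_nonneg h1p (pow_nonneg hζ0.le _)
  have hwle : ∀ m : ℕ, (1 - p) / ζ ^ (m + 1) ≤ (1 - p) / ζ := by
    intro m
    exact div_le_div_of_nonneg_left h1p hζ0 (le_self_pow₀ hζ (Nat.succ_ne_zero m))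
  -- coordinates of Lam^m
  have coordLam : ∀ (m : ℕ) (v : lp (fun _ : ℕ => ℝ) 1) (n : ℕ),
      ((Lam ^ m) v) n = (γ / ζ ^ (n + 1)) ^ m * v n := by
    intro m
    induction m with
    | zero => intro v n; simp
    | succ m ih =>
      intro v n
      rw [pow_succ, ContinuousLinearMap.mul_apply, ih, hLam, pow_succ]
      ring
  -- eigenvector identity for geometric vectors
  have eig : ∀ (w c : ℝ), 0 ≤ w → w ≤ (1 - p) / ζ → ∀ v : lp (fun _ : ℕ => ℝ) 1,
      (∀ n, v n = c * w ^ n) →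
      Gop v = (-1 + 2 * w + ∑' k : ℕ, T (k + 1) * w ^ (k + 1)) • v := by
    intro w c hw hwle' v hv
    have S1 := Ssum w hw hwle'
    have S2 : Summable fun k : ℕ => T (k + 2) * w ^ (k + 2) := by
      have := (summable_nat_add_iff 1).2 S1
      simpa [add_assoc] using this
    apply lp.ext
    funext n
    have key : ∑' k : ℕ, T (k + 2) * v (n + k + 2)
        = c * w ^ n * ∑' k : ℕ, T (k + 2) * w ^ (k + 2) := by
      rw [← tsum_mul_left]
      congr 1
      funext k
      rw [hv]
      have : n + k + 2 = n + (k + 2) := by ring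
      rw [this, pow_add]
      ring
    have split : ∑' k : ℕ, T (k + 1) * w ^ (k + 1)
        = T 1 * w ^ 1 + ∑' k : ℕ, T (k + 2) * w ^ (k + 2) := by
      rw [Summable.tsum_eq_zero_add S1]
    calc Gop v n = -(v n) + (T 1 + 2) * v (n + 1) +
        ∑' k : ℕ, T (k + 2) * v (n + k + 2) := hG v n
      _ = -(c * w ^ n) + (T 1 + 2) * (c * w ^ (n + 1)) +
          c * w ^ n * ∑' k : ℕ, T (k + 2) * w ^ (k + 2) := by rw [hv, hv, key]
      _ = (-1 + 2 * w + (T 1 * w ^ 1 + ∑' k : ℕ, T (k + 2) * w ^ (k + 2)))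
          * (c * w ^ n) := by rw [pow_succ]; ring
      _ = ((-1 + 2 * w + ∑' k : ℕ, T (k + 1) * w ^ (k + 1)) • v) n := by
          rw [lp.coeFn_smul, Pi.smul_apply, hv, split, smul_eq_mul]
  -- coordinates of Lam^(m+1) p0 are geometric
  have geom : ∀ (m n : ℕ), ((Lam ^ (m + 1)) p0) n
      = (γ ^ (m + 1) * p / ζ ^ (m + 1)) * ((1 - p) / ζ ^ (m + 1)) ^ n := by
    intro m n
    rw [coordLam, hp0]
    have hz : ((ζ:ℝ) ^ (n + 1)) ^ (m + 1) = ζ ^ (m + 1) * (ζ ^ (m + 1)) ^ n := by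
      rw [← pow_mul, ← pow_succ', ← pow_mul, Nat.mul_comm]
    rw [div_pow, div_pow, hz]
    have hzn : (ζ:ℝ) ^ (m + 1) ≠ 0 := pow_ne_zero _ hζ0.ne'
    field_simp
  -- main eigen-expansion of (Gop ∘ Lam)^m applied to p0
  have main : ∀ m : ℕ, ((Gop.comp Lam) ^ m) p0
      = (∏ i ∈ Finset.range m,
          (-1 + 2 * ((1 - p) / ζ ^ (i + 1)) +
            ∑' k : ℕ, T (k + 1) * ((1 - p) / ζ ^ (i + 1)) ^ (k + 1))) •
        ((Lam ^ m) p0) := by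
    intro m
    induction m with
    | zero => simp
    | succ m ih =>
      have step1 : ((Gop.comp Lam) ^ (m + 1)) p0
          = Gop (Lam (((Gop.comp Lam) ^ m) p0)) := by
        rw [pow_succ']; rfl
      have step2 : Lam ((Lam ^ m) p0) = (Lam ^ (m + 1)) p0 := by
        rw [pow_succ']; rfl
      rw [step1, ih, map_smul, step2, map_smul,
        eig ((1 - p) / ζ ^ (m + 1)) (γ ^ (m + 1) * p / ζ ^ (m + 1)) (hwnn m)
          (hwle m) _ (geom m),
        smul_smul, Finset.prod_range_succ, mul_comm]
  -- assemble via the exponential series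
  have hA := NormedSpace.expSeries_summable' (𝕂 := ℝ) (s • Gop.comp Lam)
  set φ : (lp (fun _ : ℕ => ℝ) 1 →L[ℝ] lp (fun _ : ℕ => ℝ) 1) →L[ℝ] lp (fun _ : ℕ => ℝ) 1 := ContinuousLinearMap.apply ℝ (lp (fun _ : ℕ => ℝ) 1) p0 with hφ
  have hterm : ∀ n : ℕ, φ (((n.factorial : ℝ))⁻¹ • (s • Gop.comp Lam) ^ n)
      = ((s ^ n / (Nat.factorial n) *
          ∏ i ∈ Finset.range n,
            (-1 + 2 * ((1 - p) / ζ ^ (i + 1)) +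
              ∑' k : ℕ, T (k + 1) * ((1 - p) / ζ ^ (i + 1)) ^ (k + 1))) •
        ((Lam ^ n) p0)) := by
    intro n
    have : φ (((n.factorial : ℝ))⁻¹ • (s • Gop.comp Lam) ^ n)
        = ((n.factorial : ℝ))⁻¹ • s ^ n • (((Gop.comp Lam) ^ n) p0) := by
      rw [smul_pow]
      simp [hφ, ContinuousLinearMap.apply_apply]
    rw [this, main n, smul_smul, smul_smul]
    congr 1
    field_simp
  have hsum2 : HasSum (fun n : ℕ => φ (((n.factorial : ℝ))⁻¹ • (s • Gop.comp Lam) ^ n))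
      (φ (∑' n : ℕ, ((n.factorial : ℝ))⁻¹ • (s • Gop.comp Lam) ^ n)) :=
    hA.hasSum.mapL φ
  have hexp : NormedSpace.exp (s • Gop.comp Lam) p0
      = ∑' n : ℕ, φ (((n.factorial : ℝ))⁻¹ • (s • Gop.comp Lam) ^ n) := by
    rw [NormedSpace.exp_eq_tsum (𝕂 := ℝ)]
    exact (hsum2.tsum_eq).symm
  rw [hexp]
  have hsummg : Summable fun n : ℕ => φ (((n.factorial : ℝ))⁻¹ • (s • Gop.comp Lam) ^ n) :=
    hsum2.summable
  rw [Summable.tsum_eq_zero_add hsummg]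
  congr 1
  · rw [hterm 0]; simp
  · exact tsum_congr fun m => hterm (m + 1)
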